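/- Let G be an infinite connected simple graph in which every vertex has degree 1 or degree 3, and in which every vertex of degree 3 is adjacent to exactly one vertex of degree 1 (equivalently, to exactly two vertices of degree 3). Then G is isomorphic to the caterpillar graph L. -/

import Mathlib

open SimpleGraph

def caterpillar : SimpleGraph (ℤ × Fin 2) where
  Adj p q := (p.2 = 0 ∧ q.2 = 0 ∧ |p.1 - q.1| = 1) ∨
    (p.1 = q.1 ∧ ((p.2 = 0 ∧ q.2 = 1) ∨ (p.2 = 1 ∧ q.2 = 0)))
  symm := by
    constructor
    intro p q h
    rcases h with ⟨h0, h1, h2⟩ | ⟨h0, h1⟩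
    · exact Or.inl ⟨h1, h0, by rw [abs_sub_comm]; exact h2⟩
    · exact Or.inr ⟨h0.symm, by tauto⟩
  loopless := by
    constructor
    intro p h
    rcases h with ⟨_, _, h2⟩ | ⟨_, ⟨h1, h2⟩ | ⟨h1, h2⟩⟩
    · simp at h2
    · rw [h1] at h2; exact absurd h2 (by decide)
    · rw [h1] at h2; exact absurd h2 (by decide)

namespace IsoCatAux

variable {V : Type*}

lemma mem_of_walk {G : SimpleGraph V} {S : Set V}
    (hcl : ∀ x ∈ S, ∀ y, G.Adj x y → y ∈ S) :
    ∀ {w v : V}, G.Walk w v → w ∈ S → v ∈ S := by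
  intro w v p
  induction p with
  | nil => exact id
  | cons h _ ih => exact fun hw => ih (hcl _ hw _ h)

lemma mem_closed {G : SimpleGraph V} (hconn : G.Connected) {S : Set V}
    (hne : S.Nonempty) (hcl : ∀ x ∈ S, ∀ y, G.Adj x y → y ∈ S) : ∀ v, v ∈ S := by
  obtain ⟨w, hw⟩ := hne
  intro v
  obtain ⟨p⟩ := hconn w v
  exact mem_of_walk hcl p hw

lemma false_of_closed [Infinite V] {G : SimpleGraph V} (hconn : G.Connected) {S : Set V}
    (hS : S.Finite) (hne : S.Nonempty) (hcl : ∀ x ∈ S, ∀ y, G.Adj x y → y ∈ S) : False := by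
  have h1 : (Set.univ : Set V).Finite :=
    hS.subset (fun v _ => mem_closed hconn hne hcl v)
  exact Set.infinite_univ h1

noncomputable def nxt (G : SimpleGraph V) (v u : V) : V :=
  @Classical.epsilon V ⟨v⟩ (fun w => G.Adj v w ∧ (G.neighborSet w).ncard = 3 ∧ w ≠ u)

noncomputable def pend (G : SimpleGraph V) (v : V) : V :=
  @Classical.epsilon V ⟨v⟩ (fun w => G.Adj v w ∧ (G.neighborSet w).ncard = 1)

noncomputable def stp (G : SimpleGraph V) : V × V → V × V :=
  fun x => (x.2, nxt G x.2 x.1)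

noncomputable def seq (G : SimpleGraph V) (a b v0 : V) (n : ℤ) : V :=
  if 0 ≤ n then ((stp G)^[n.toNat] (b, v0)).2 else ((stp G)^[(-n).toNat] (a, v0)).2

variable {G : SimpleGraph V}

lemma nbr_finite (hdeg : ∀ v, (G.neighborSet v).ncard = 1 ∨ (G.neighborSet v).ncard = 3)
    (v : V) : (G.neighborSet v).Finite := by
  apply Set.finite_of_ncard_ne_zero
  rcases hdeg v with h | h <;> omega

lemma pend_spec
    (h31 : ∀ v, (G.neighborSet v).ncard = 3 →
      {w | G.Adj v w ∧ (G.neighborSet w).ncard = 1}.ncard = 1)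
    {v : V} (hv : (G.neighborSet v).ncard = 3) :
    G.Adj v (pend G v) ∧ (G.neighborSet (pend G v)).ncard = 1 ∧
      ∀ w, G.Adj v w → (G.neighborSet w).ncard = 1 → w = pend G v := by
  obtain ⟨p, hp⟩ := Set.ncard_eq_one.mp (h31 v hv)
  have hpmem : p ∈ {w | G.Adj v w ∧ (G.neighborSet w).ncard = 1} := by
    rw [hp]; exact rfl
  have hex : ∃ w, G.Adj v w ∧ (G.neighborSet w).ncard = 1 := ⟨p, hpmem⟩
  have hspec : G.Adj v (pend G v) ∧ (G.neighborSet (pend G v)).ncard = 1 :=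
    Classical.epsilon_spec_aux ⟨v⟩ _ hex
  refine ⟨hspec.1, hspec.2, fun w hw1 hw2 => ?_⟩
  have h1 : w ∈ {w | G.Adj v w ∧ (G.neighborSet w).ncard = 1} := ⟨hw1, hw2⟩
  have h2 : pend G v ∈ {w | G.Adj v w ∧ (G.neighborSet w).ncard = 1} := ⟨hspec.1, hspec.2⟩
  rw [hp, Set.mem_singleton_iff] at h1 h2
  rw [h1, h2]

lemma spine_nbrs_two
    (hdeg : ∀ v, (G.neighborSet v).ncard = 1 ∨ (G.neighborSet v).ncard = 3)
    (h31 : ∀ v, (G.neighborSet v).ncard = 3 →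
      {w | G.Adj v w ∧ (G.neighborSet w).ncard = 1}.ncard = 1)
    {v : V} (hv : (G.neighborSet v).ncard = 3) :
    {w | G.Adj v w ∧ (G.neighborSet w).ncard = 3}.ncard = 2 := by
  set N1 : Set V := {w | G.Adj v w ∧ (G.neighborSet w).ncard = 1} with hN1
  set N3 : Set V := {w | G.Adj v w ∧ (G.neighborSet w).ncard = 3} with hN3
  have hun : G.neighborSet v = N1 ∪ N3 := by
    ext w
    simp only [mem_neighborSet, hN1, hN3, Set.mem_union, Set.mem_setOf_eq]
    constructor
    · intro h; rcases hdeg w with h1 | h1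
      · exact Or.inl ⟨h, h1⟩
      · exact Or.inr ⟨h, h1⟩
    · rintro (⟨h, _⟩ | ⟨h, _⟩) <;> exact h
  have hdisj : Disjoint N1 N3 := by
    rw [Set.disjoint_left]
    rintro w ⟨_, h1⟩ ⟨_, h3⟩
    omega
  have hNfin := nbr_finite hdeg v
  rw [hun] at hNfin
  have h1f : N1.Finite := hNfin.subset Set.subset_union_left
  have h3f : N3.Finite := hNfin.subset Set.subset_union_right
  have := Set.ncard_union_eq hdisj h1f h3f
  rw [← hun, hv, h31 v hv] at this
  omega

lemma nxt_spec
    (hdeg : ∀ v, (G.neighborSet v).ncard = 1 ∨ (G.neighborSet v).ncard = 3)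
    (h31 : ∀ v, (G.neighborSet v).ncard = 3 →
      {w | G.Adj v w ∧ (G.neighborSet w).ncard = 1}.ncard = 1)
    {v u : V} (hv : (G.neighborSet v).ncard = 3) (hu : G.Adj v u)
    (hu3 : (G.neighborSet u).ncard = 3) :
    (G.Adj v (nxt G v u) ∧ (G.neighborSet (nxt G v u)).ncard = 3 ∧ nxt G v u ≠ u) ∧
      ∀ w, G.Adj v w → (G.neighborSet w).ncard = 3 → w = u ∨ w = nxt G v u := by
  obtain ⟨x, y, hxy, hset⟩ := Set.ncard_eq_two.mp (spine_nbrs_two hdeg h31 hv)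
  have humem : u ∈ ({x, y} : Set V) := by rw [← hset]; exact ⟨hu, hu3⟩
  have hxmem : x ∈ {w | G.Adj v w ∧ (G.neighborSet w).ncard = 3} := by
    rw [hset]; exact Or.inl rfl
  have hymem : y ∈ {w | G.Adj v w ∧ (G.neighborSet w).ncard = 3} := by
    rw [hset]; exact Or.inr rfl
  have hex : ∃ w, G.Adj v w ∧ (G.neighborSet w).ncard = 3 ∧ w ≠ u := by
    rcases humem with rfl | rfl
    · exact ⟨y, hymem.1, hymem.2, fun h => hxy h.symm⟩
    · exact ⟨x, hxmem.1, hxmem.2, hxy⟩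
  have hspec : G.Adj v (nxt G v u) ∧ (G.neighborSet (nxt G v u)).ncard = 3 ∧ nxt G v u ≠ u :=
    Classical.epsilon_spec_aux ⟨v⟩ _ hex
  refine ⟨⟨hspec.1, hspec.2.1, hspec.2.2⟩, fun w hw1 hw2 => ?_⟩
  have hwmem : w ∈ {w | G.Adj v w ∧ (G.neighborSet w).ncard = 3} := ⟨hw1, hw2⟩
  have hnmem : nxt G v u ∈ {w | G.Adj v w ∧ (G.neighborSet w).ncard = 3} :=
    ⟨hspec.1, hspec.2.1⟩
  rw [hset] at hwmem hnmem
  simp only [Set.mem_insert_iff, Set.mem_singleton_iff] at hwmem hnmem humem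
  have hne := hspec.2.2
  rcases humem with h2 | h2 <;> rcases hnmem with h1 | h1
  · exact absurd (h1.trans h2.symm) hne
  · rcases hwmem with h | h
    · exact Or.inl (h.trans h2.symm)
    · exact Or.inr (h.trans h1.symm)
  · rcases hwmem with h | h
    · exact Or.inr (h.trans h1.symm)
    · exact Or.inl (h.trans h2.symm)
  · exact absurd (h1.trans h2.symm) hne

lemma leg_nbr_spine [Infinite V] (hconn : G.Connected)
    (hdeg : ∀ v, (G.neighborSet v).ncard = 1 ∨ (G.neighborSet v).ncard = 3)
    {w u : V} (hw : (G.neighborSet w).ncard = 1) (hadj : G.Adj w u) :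
    (G.neighborSet u).ncard = 3 := by
  rcases hdeg u with hu | hu
  · exfalso
    have hwset : G.neighborSet w = {u} := by
      obtain ⟨z, hz⟩ := Set.ncard_eq_one.mp hw
      have : u ∈ ({z} : Set V) := hz ▸ hadj
      rw [Set.mem_singleton_iff] at this
      rw [hz, this]
    have huset : G.neighborSet u = {w} := by
      obtain ⟨z, hz⟩ := Set.ncard_eq_one.mp hu
      have : w ∈ ({z} : Set V) := hz ▸ hadj.symm
      rw [Set.mem_singleton_iff] at this
      rw [hz, this]
    refine false_of_closed hconn (S := {w, u}) ((Set.finite_singleton u).insert w)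
      ⟨w, Or.inl rfl⟩ ?_
    rintro x (rfl | rfl) y hy
    · have : y ∈ G.neighborSet x := hy
      rw [hwset] at this; exact Or.inr this
    · have : y ∈ G.neighborSet x := hy
      rw [huset] at this; exact Or.inl this
  · exact hu

lemma exists_spine [Infinite V] (hconn : G.Connected)
    (hdeg : ∀ v, (G.neighborSet v).ncard = 1 ∨ (G.neighborSet v).ncard = 3) :
    ∃ v, (G.neighborSet v).ncard = 3 := by
  obtain ⟨v⟩ : Nonempty V := inferInstance
  rcases hdeg v with hv | hv
  · obtain ⟨u, hu⟩ := Set.nonempty_of_ncard_ne_zero (s := G.neighborSet v) (by omega)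
    exact ⟨u, leg_nbr_spine hconn hdeg hv hu⟩
  · exact ⟨v, hv⟩


structure Ctx {V : Type*} (G : SimpleGraph V) where
  hdeg : ∀ v, (G.neighborSet v).ncard = 1 ∨ (G.neighborSet v).ncard = 3
  h31 : ∀ v, (G.neighborSet v).ncard = 3 →
      {w | G.Adj v w ∧ (G.neighborSet w).ncard = 1}.ncard = 1
  v0 : V
  a : V
  b : V
  hv0 : (G.neighborSet v0).ncard = 3
  ha : G.Adj v0 a
  hb : G.Adj v0 b
  ha3 : (G.neighborSet a).ncard = 3
  hb3 : (G.neighborSet b).ncard = 3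
  hab : a ≠ b

namespace Ctx

variable {V : Type*} {G : SimpleGraph V} (C : Ctx G)
include C

noncomputable def f : ℤ → V := seq G C.a C.b C.v0
noncomputable def cc : ℕ → V × V := fun n => (stp G)^[n] (C.b, C.v0)
noncomputable def dd : ℕ → V × V := fun n => (stp G)^[n] (C.a, C.v0)

lemma cc_succ (n : ℕ) : C.cc (n + 1) = ((C.cc n).2, nxt G (C.cc n).2 (C.cc n).1) :=
  Function.iterate_succ_apply' _ _ _

lemma dd_succ (n : ℕ) : C.dd (n + 1) = ((C.dd n).2, nxt G (C.dd n).2 (C.dd n).1) :=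
  Function.iterate_succ_apply' _ _ _

lemma nxtP {v u : V} (hv : (G.neighborSet v).ncard = 3) (hu : G.Adj v u)
    (hu3 : (G.neighborSet u).ncard = 3) :
    G.Adj v (nxt G v u) ∧ (G.neighborSet (nxt G v u)).ncard = 3 ∧ nxt G v u ≠ u :=
  (nxt_spec C.hdeg C.h31 hv hu hu3).1

lemma nxtC {v u : V} (hv : (G.neighborSet v).ncard = 3) (hu : G.Adj v u)
    (hu3 : (G.neighborSet u).ncard = 3) :
    ∀ w, G.Adj v w → (G.neighborSet w).ncard = 3 → w = u ∨ w = nxt G v u :=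
  (nxt_spec C.hdeg C.h31 hv hu hu3).2

lemma nxt_invol {v u : V} (hv : (G.neighborSet v).ncard = 3) (hu : G.Adj v u)
    (hu3 : (G.neighborSet u).ncard = 3) : nxt G v (nxt G v u) = u := by
  obtain ⟨h1, h2, h3⟩ := C.nxtP hv hu hu3
  rcases C.nxtC hv h1 h2 u hu hu3 with h | h
  · exact absurd h.symm h3
  · exact h.symm

lemma cc_inv (n : ℕ) : G.Adj (C.cc n).2 (C.cc n).1 ∧ (G.neighborSet (C.cc n).1).ncard = 3 ∧
    (G.neighborSet (C.cc n).2).ncard = 3 := by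
  induction n with
  | zero => exact ⟨C.hb, C.hb3, C.hv0⟩
  | succ n ih =>
    obtain ⟨h1, h2, h3⟩ := ih
    rw [C.cc_succ]
    exact ⟨(C.nxtP h3 h1 h2).1.symm, h3, (C.nxtP h3 h1 h2).2.1⟩

lemma dd_inv (n : ℕ) : G.Adj (C.dd n).2 (C.dd n).1 ∧ (G.neighborSet (C.dd n).1).ncard = 3 ∧
    (G.neighborSet (C.dd n).2).ncard = 3 := by
  induction n with
  | zero => exact ⟨C.ha, C.ha3, C.hv0⟩
  | succ n ih =>
    obtain ⟨h1, h2, h3⟩ := ih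
    rw [C.dd_succ]
    exact ⟨(C.nxtP h3 h1 h2).1.symm, h3, (C.nxtP h3 h1 h2).2.1⟩

lemma f_ofNat (n : ℕ) : C.f n = (C.cc n).2 := by
  have h1 : (0 : ℤ) ≤ (n : ℤ) := Int.natCast_nonneg n
  have h2 : ((n : ℤ)).toNat = n := Int.toNat_natCast n
  rw [f, seq, if_pos h1, h2]
  rfl

lemma f_negSucc (n : ℕ) : C.f (-((n : ℤ) + 1)) = (C.dd (n + 1)).2 := by
  have h1 : ¬ ((0 : ℤ) ≤ -((n : ℤ) + 1)) := by omega
  have h2 : (-(-((n : ℤ) + 1))).toNat = n + 1 := by omega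
  rw [f, seq, if_neg h1, h2]
  rfl

lemma f_neg (n : ℕ) : C.f (-(n : ℤ)) = (C.dd n).2 := by
  cases n with
  | zero =>
    show C.f 0 = _
    have := C.f_ofNat 0
    norm_num at this
    rw [this]; rfl
  | succ k =>
    have : -((k : ℤ) + 1) = -((k + 1 : ℕ) : ℤ) := by push_cast; ring
    rw [← this, C.f_negSucc k]

lemma f_zero : C.f 0 = C.v0 := by
  have := C.f_ofNat 0; norm_num at this; rw [this]; rfl

lemma f_one : C.f 1 = C.a := by
  have h := C.f_ofNat 1
  norm_num at h
  rw [h, cc_succ]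
  show nxt G (C.cc 0).2 (C.cc 0).1 = C.a
  rcases C.nxtC C.hv0 C.hb C.hb3 C.a C.ha C.ha3 with h1 | h1
  · exact absurd h1 C.hab
  · exact h1.symm

lemma f_negOne : C.f (-1) = C.b := by
  have h : (-1 : ℤ) = -((0 : ℕ) + 1) := by norm_num
  rw [h, C.f_negSucc 0, dd_succ]
  show nxt G (C.dd 0).2 (C.dd 0).1 = C.b
  rcases C.nxtC C.hv0 C.ha C.ha3 C.b C.hb C.hb3 with h1 | h1
  · exact absurd h1.symm C.hab
  · exact h1.symm

lemma f_spine (n : ℤ) : (G.neighborSet (C.f n)).ncard = 3 := by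
  rcases Int.eq_nat_or_neg n with ⟨m, rfl | rfl⟩
  · rw [f_ofNat]; exact (C.cc_inv m).2.2
  · rw [f_neg]; exact (C.dd_inv m).2.2

lemma f_adj (n : ℤ) : G.Adj (C.f n) (C.f (n + 1)) := by
  cases n with
  | ofNat m =>
    have e : (Int.ofNat m) = (m : ℤ) := rfl
    have e2 : ((m : ℤ) + 1) = ((m + 1 : ℕ) : ℤ) := by push_cast; ring
    rw [e, e2, f_ofNat, f_ofNat, cc_succ]
    exact (C.nxtP (C.cc_inv m).2.2 (C.cc_inv m).1 (C.cc_inv m).2.1).1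
  | negSucc m =>
    have e : (Int.negSucc m) = -((m : ℤ) + 1) := Int.negSucc_eq m
    have e2 : -((m : ℤ) + 1) + 1 = -(m : ℤ) := by ring
    rw [e, e2, f_negSucc, f_neg, dd_succ]
    exact (C.nxtP (C.dd_inv m).2.2 (C.dd_inv m).1 (C.dd_inv m).2.1).1.symm

lemma f_recF (m : ℕ) : C.f ((m : ℤ) + 1) = nxt G (C.f m) (C.f ((m : ℤ) - 1)) := by
  cases m with
  | zero =>
    norm_num
    rw [C.f_one, C.f_zero, C.f_negOne]
    rcases C.nxtC C.hv0 C.hb C.hb3 C.a C.ha C.ha3 with h1 | h1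
    · exact absurd h1 C.hab
    · exact h1
  | succ k =>
    have e2 : ((k + 1 : ℕ) : ℤ) + 1 = ((k + 2 : ℕ) : ℤ) := by push_cast; ring
    have e3 : ((k + 1 : ℕ) : ℤ) - 1 = ((k : ℕ) : ℤ) := by push_cast; ring
    rw [e2, e3, f_ofNat, f_ofNat, f_ofNat]
    show (C.cc (k + 1 + 1)).2 = _
    rw [C.cc_succ (k + 1), C.cc_succ k]

lemma f_recB (m : ℕ) : C.f (-(m : ℤ) - 1) = nxt G (C.f (-(m : ℤ))) (C.f (-(m : ℤ) + 1)) := by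
  cases m with
  | zero =>
    norm_num
    rw [C.f_one, C.f_zero, C.f_negOne]
    rcases C.nxtC C.hv0 C.ha C.ha3 C.b C.hb C.hb3 with h1 | h1
    · exact absurd h1.symm C.hab
    · exact h1
  | succ k =>
    have e2 : -((k + 1 : ℕ) : ℤ) - 1 = -(((k + 1 : ℕ) : ℤ)) - 1 := rfl
    have e4 : -((k + 1 : ℕ) : ℤ) - 1 = -(((k + 1 : ℕ) : ℤ) + 1) := by ring
    have e5 : (-((k + 1 : ℕ) : ℤ)) = -(((k : ℕ) : ℤ) + 1) := by push_cast; ring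
    have e6 : -((k + 1 : ℕ) : ℤ) + 1 = -((k : ℕ) : ℤ) := by push_cast; ring
    rw [e4, e6, e5, f_negSucc, f_negSucc, f_neg]
    show (C.dd (k + 1 + 1)).2 = _
    rw [C.dd_succ (k + 1), C.dd_succ k]

lemma f_rec1 (n : ℤ) : C.f (n + 1) = nxt G (C.f n) (C.f (n - 1)) := by
  rcases le_or_gt 0 n with h | h
  · lift n to ℕ using h
    exact C.f_recF n
  · obtain ⟨m, rfl⟩ : ∃ m : ℕ, n = -(m : ℤ) := ⟨(-n).toNat, by omega⟩
    have hB := C.f_recB m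
    rw [hB]
    exact (C.nxt_invol (C.f_spine (-(m : ℤ))) (C.f_adj (-(m : ℤ)))
      (C.f_spine (-(m : ℤ) + 1))).symm

lemma f_rec2 (n : ℤ) : C.f (n - 1) = nxt G (C.f n) (C.f (n + 1)) := by
  have hadj : G.Adj (C.f n) (C.f (n - 1)) := by
    have := (C.f_adj (n - 1)).symm
    rwa [show n - 1 + 1 = n by ring] at this
  rw [C.f_rec1 n]
  exact (C.nxt_invol (C.f_spine n) hadj (C.f_spine (n - 1))).symm

lemma f_ne_consec (n : ℤ) : C.f (n + 1) ≠ C.f (n - 1) := by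
  have hadj : G.Adj (C.f n) (C.f (n - 1)) := by
    have := (C.f_adj (n - 1)).symm
    rwa [show n - 1 + 1 = n by ring] at this
  rw [C.f_rec1 n]
  exact (C.nxtP (C.f_spine n) hadj (C.f_spine (n - 1))).2.2

lemma f_cover (n : ℤ) {w : V} (hw : G.Adj (C.f n) w) (hw3 : (G.neighborSet w).ncard = 3) :
    w = C.f (n + 1) ∨ w = C.f (n - 1) := by
  rcases C.nxtC (C.f_spine n) (C.f_adj n) (C.f_spine (n + 1)) w hw hw3 with h | h
  · exact Or.inl h
  · right; rw [h, ← C.f_rec2 n]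

lemma key_fwd {m m' : ℤ} (e0 : C.f m = C.f m') (e1 : C.f (m + 1) = C.f (m' + 1)) :
    C.f (m + 2) = C.f (m' + 2) := by
  have a1 := C.f_rec1 (m + 1); have a2 := C.f_rec1 (m' + 1)
  rw [show m + 1 - 1 = m by ring] at a1
  rw [show m' + 1 - 1 = m' by ring] at a2
  rw [show m + 2 = m + 1 + 1 by ring, show m' + 2 = m' + 1 + 1 by ring, a1, a2, e0, e1]

lemma key_bwd {m m' : ℤ} (e0 : C.f m = C.f m') (e1 : C.f (m + 1) = C.f (m' + 1)) :
    C.f (m - 1) = C.f (m' - 1) := by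
  rw [C.f_rec2 m, C.f_rec2 m', e0, e1]

lemma key_fwdR {m m' : ℤ} (e0 : C.f m = C.f m') (e1 : C.f (m + 1) = C.f (m' - 1)) :
    C.f (m + 2) = C.f (m' - 2) := by
  have a1 := C.f_rec1 (m + 1)
  rw [show m + 1 - 1 = m by ring] at a1
  have a2 := C.f_rec2 (m' - 1)
  rw [show m' - 1 + 1 = m' by ring] at a2
  rw [show m + 2 = m + 1 + 1 by ring, show m' - 2 = m' - 1 - 1 by ring, a1, a2, e0, e1]

lemma key_bwdR {m m' : ℤ} (e0 : C.f m = C.f m') (e1 : C.f (m + 1) = C.f (m' - 1)) :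
    C.f (m - 1) = C.f (m' + 1) := by
  have a1 := C.f_rec2 m
  have a2 := C.f_rec1 m'
  rw [a1, a2, e0, e1]

lemma f_prop {p q : ℤ} (h0 : C.f p = C.f q) (h1 : C.f (p + 1) = C.f (q + 1)) :
    ∀ n : ℤ, C.f (p + n) = C.f (q + n) := by
  have H : ∀ n : ℤ, C.f (p + n) = C.f (q + n) ∧ C.f (p + n + 1) = C.f (q + n + 1) := by
    intro n
    induction n using Int.induction_on with
    | zero => simp only [add_zero, sub_zero]; exact ⟨h0, h1⟩
    | succ k ih =>
      refine ⟨by rw [show p + ((k : ℤ) + 1) = p + k + 1 by ring,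
        show q + ((k : ℤ) + 1) = q + k + 1 by ring]; exact ih.2, ?_⟩
      have := C.key_fwd ih.1 ih.2
      rw [show p + k + 2 = p + ((k : ℤ) + 1) + 1 by ring,
        show q + k + 2 = q + ((k : ℤ) + 1) + 1 by ring] at this
      exact this
    | pred k ih =>
      refine ⟨?_, by rw [show p + (-(k : ℤ) - 1) + 1 = p + -(k : ℤ) by ring,
        show q + (-(k : ℤ) - 1) + 1 = q + -(k : ℤ) by ring]; exact ih.1⟩
      have := C.key_bwd ih.1 ih.2
      rw [show p + -(k : ℤ) - 1 = p + (-(k : ℤ) - 1) by ring,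
        show q + -(k : ℤ) - 1 = q + (-(k : ℤ) - 1) by ring] at this
      exact this
  exact fun n => (H n).1

lemma f_refl {p q : ℤ} (h0 : C.f p = C.f q) (h1 : C.f (p + 1) = C.f (q - 1)) :
    ∀ n : ℤ, C.f (p + n) = C.f (q - n) := by
  have H : ∀ n : ℤ, C.f (p + n) = C.f (q - n) ∧ C.f (p + n + 1) = C.f (q - n - 1) := by
    intro n
    induction n using Int.induction_on with
    | zero => simp only [add_zero, sub_zero]; exact ⟨h0, h1⟩
    | succ k ih =>
      refine ⟨by rw [show p + ((k : ℤ) + 1) = p + k + 1 by ring,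
        show q - ((k : ℤ) + 1) = q - k - 1 by ring]; exact ih.2, ?_⟩
      have := C.key_fwdR ih.1 ih.2
      rw [show p + k + 2 = p + ((k : ℤ) + 1) + 1 by ring,
        show q - k - 2 = q - ((k : ℤ) + 1) - 1 by ring] at this
      exact this
    | pred k ih =>
      refine ⟨?_, by rw [show p + (-(k : ℤ) - 1) + 1 = p + -(k : ℤ) by ring,
        show q - (-(k : ℤ) - 1) - 1 = q - -(k : ℤ) by ring]; exact ih.1⟩
      have := C.key_bwdR ih.1 ih.2
      rw [show p + -(k : ℤ) - 1 = p + (-(k : ℤ) - 1) by ring,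
        show q - -(k : ℤ) + 1 = q - (-(k : ℤ) - 1) by ring] at this
      exact this
  exact fun n => (H n).1

lemma pend_adj (n : ℤ) : G.Adj (C.f n) (pend G (C.f n)) :=
  (pend_spec C.h31 (C.f_spine n)).1

lemma pend_deg (n : ℤ) : (G.neighborSet (pend G (C.f n))).ncard = 1 :=
  (pend_spec C.h31 (C.f_spine n)).2.1

lemma pend_unique (n : ℤ) {w : V} (hw : G.Adj (C.f n) w)
    (hw1 : (G.neighborSet w).ncard = 1) : w = pend G (C.f n) :=
  (pend_spec C.h31 (C.f_spine n)).2.2 w hw hw1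

lemma leg_nbr (n : ℤ) {y : V} (hy : G.Adj (pend G (C.f n)) y) : y = C.f n := by
  obtain ⟨z, hz⟩ := Set.ncard_eq_one.mp (C.pend_deg n)
  have h1 : C.f n ∈ G.neighborSet (pend G (C.f n)) := (C.pend_adj n).symm
  have h2 : y ∈ G.neighborSet (pend G (C.f n)) := hy
  rw [hz, Set.mem_singleton_iff] at h1 h2
  rw [h2, h1]

/-- The candidate isomorphism map. -/
noncomputable def emap (C : Ctx G) : ℤ × Fin 2 → V :=
  fun x => if x.2 = 0 then C.f x.1 else pend G (C.f x.1)

lemma emap_zero (n : ℤ) : C.emap (n, 0) = C.f n := rfl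

lemma emap_one (n : ℤ) : C.emap (n, 1) = pend G (C.f n) := rfl

end Ctx
end IsoCatAux

open IsoCatAux

theorem iso_caterpillar_of_degrees {V : Type*} [Infinite V] (G : SimpleGraph V)
    (hconn : G.Connected)
    (hdeg : ∀ v, (G.neighborSet v).ncard = 1 ∨ (G.neighborSet v).ncard = 3)
    (h31 : ∀ v, (G.neighborSet v).ncard = 3 →
      {w | G.Adj v w ∧ (G.neighborSet w).ncard = 1}.ncard = 1) :
    Nonempty (G ≃g caterpillar) := by
  classical
  obtain ⟨v0, hv0⟩ := exists_spine hconn hdeg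
  obtain ⟨a, b, hab, hset⟩ := Set.ncard_eq_two.mp (spine_nbrs_two hdeg h31 hv0)
  have hamem : G.Adj v0 a ∧ (G.neighborSet a).ncard = 3 := by
    have : a ∈ {w | G.Adj v0 w ∧ (G.neighborSet w).ncard = 3} := by
      rw [hset]; exact Set.mem_insert _ _
    exact this
  have hbmem : G.Adj v0 b ∧ (G.neighborSet b).ncard = 3 := by
    have : b ∈ {w | G.Adj v0 w ∧ (G.neighborSet w).ncard = 3} := by
      rw [hset]; exact Set.mem_insert_of_mem _ rfl
    exact this
  set C : Ctx G := ⟨hdeg, h31, v0, a, b, hv0, hamem.1, hbmem.1, hamem.2, hbmem.2, hab⟩ with hC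
  -- the closed set of all spine and leg vertices produced by `C.f`
  have hSne : (Set.range C.f ∪ pend G '' Set.range C.f).Nonempty :=
    ⟨C.f 0, Or.inl ⟨0, rfl⟩⟩
  have hScl : ∀ x ∈ (Set.range C.f ∪ pend G '' Set.range C.f), ∀ y, G.Adj x y →
      y ∈ (Set.range C.f ∪ pend G '' Set.range C.f) := by
    rintro x (⟨n, rfl⟩ | ⟨x', ⟨n, rfl⟩, rfl⟩) y hy
    · rcases hdeg y with h1 | h1
      · exact Or.inr ⟨C.f n, ⟨n, rfl⟩, (C.pend_unique n hy h1).symm⟩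
      · rcases C.f_cover n hy h1 with h | h
        · exact Or.inl ⟨n + 1, h.symm⟩
        · exact Or.inl ⟨n - 1, h.symm⟩
    · exact Or.inl ⟨n, (C.leg_nbr n hy).symm⟩
  have hSuniv : ∀ v, v ∈ (Set.range C.f ∪ pend G '' Set.range C.f) :=
    mem_closed hconn hSne hScl
  -- injectivity of `C.f`
  have hinj : Function.Injective C.f := by
    intro p q h
    by_contra hne
    have hadj : G.Adj (C.f q) (C.f (p + 1)) := h ▸ C.f_adj p
    rcases C.f_cover q hadj (C.f_spine (p + 1)) with h1 | h1
    · -- periodic case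
      set t := q - p with ht
      have ht0 : t ≠ 0 := sub_ne_zero.mpr (Ne.symm hne)
      have hper : ∀ n : ℤ, C.f (p + n) = C.f (q + n) := C.f_prop h h1
      have hper' : ∀ m : ℤ, C.f m = C.f (m + t) := by
        intro m
        have h2 := hper (m - p)
        rw [show p + (m - p) = m by ring, show q + (m - p) = m + t by rw [ht]; ring] at h2
        exact h2
      have hperk : ∀ k : ℤ, ∀ m : ℤ, C.f m = C.f (m + k * t) := by
        intro k
        induction k using Int.induction_on with
        | zero => intro m; norm_num
        | succ i ih =>
          intro m
          calc C.f m = C.f (m + i * t) := ih m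
            _ = C.f (m + i * t + t) := hper' _
            _ = C.f (m + ((i : ℤ) + 1) * t) := by ring_nf
        | pred i ih =>
          intro m
          have h2 : C.f (m + (-(i : ℤ) - 1) * t) = C.f (m + (-(i : ℤ) - 1) * t + t) :=
            hper' _
          rw [show m + (-(i : ℤ) - 1) * t + t = m + (-(i : ℤ)) * t by ring] at h2
          rw [← ih m] at h2
          exact h2.symm
      set s := |t| with hs
      have hs0 : 0 < s := abs_pos.mpr ht0
      have hpers : ∀ m : ℤ, C.f m = C.f (m % s) := by
        intro m
        rcases abs_choice t with hst | hst
        · have h2 := hperk (m / s) (m % s)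
          rw [show (m / s) * t = m / s * s by rw [hs, hst], Int.emod_add_ediv_mul] at h2
          exact h2.symm
        · have h2 := hperk (-(m / s)) (m % s)
          rw [show (-(m / s)) * t = m / s * s by rw [show t = -s by omega]; ring,
            Int.emod_add_ediv_mul] at h2
          exact h2.symm
      have hfin : (Set.range C.f).Finite := by
        apply Set.Finite.subset ((Set.finite_Icc (0 : ℤ) s).image C.f)
        rintro x ⟨m, rfl⟩
        exact ⟨m % s, Set.mem_Icc.mpr ⟨Int.emod_nonneg m (ne_of_gt hs0),
          (Int.emod_lt_of_pos m hs0).le⟩, (hpers m).symm⟩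
      exact false_of_closed hconn (hfin.union (hfin.image _)) hSne hScl
    · -- reflection case
      have hrefl := C.f_refl h h1
      rcases Int.even_or_odd (q - p) with ⟨k, hk⟩ | ⟨k, hk⟩
      · have h2 := hrefl (k - 1)
        rw [show q - (k - 1) = p + k + 1 by omega,
          show p + (k - 1) = p + k - 1 by ring] at h2
        exact C.f_ne_consec (p + k) h2.symm
      · have h2 := hrefl k
        rw [show q - k = p + k + 1 by omega] at h2
        have hadj2 := C.f_adj (p + k)
        rw [← h2] at hadj2
        exact G.loopless.irrefl _ hadj2
  -- basic pend facts
  have hpendinj : ∀ m n : ℤ, pend G (C.f m) = pend G (C.f n) → m = n := by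
    intro m n hmn
    apply hinj
    exact C.leg_nbr n (by rw [← hmn]; exact (C.pend_adj m).symm)
  have hnelp : ∀ m n : ℤ, C.f m ≠ pend G (C.f n) := by
    intro m n h
    have h1 := C.f_spine m
    have h2 := C.pend_deg n
    rw [h] at h1
    omega
  -- bijectivity of emap
  have hbij : Function.Bijective C.emap := by
    constructor
    · have hfin : ∀ i : Fin 2, i = 0 ∨ i = 1 := by decide
      rintro ⟨m, i⟩ ⟨n, j⟩ hmn
      rcases hfin i with rfl | rfl <;> rcases hfin j with rfl | rfl
      · rw [C.emap_zero, C.emap_zero] at hmn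
        rw [hinj hmn]
      · rw [C.emap_zero, C.emap_one] at hmn
        exact absurd hmn (hnelp m n)
      · rw [C.emap_one, C.emap_zero] at hmn
        exact absurd hmn.symm (hnelp n m)
      · rw [C.emap_one, C.emap_one] at hmn
        rw [hpendinj m n hmn]
    · intro v
      rcases hSuniv v with ⟨n, rfl⟩ | ⟨x, ⟨n, rfl⟩, rfl⟩
      · exact ⟨(n, 0), C.emap_zero n⟩
      · exact ⟨(n, 1), C.emap_one n⟩
  -- adjacency characterizations
  have hadj00 : ∀ m n : ℤ, G.Adj (C.f m) (C.f n) ↔ |m - n| = 1 := by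
    intro m n
    constructor
    · intro hadj
      rcases C.f_cover m hadj (C.f_spine n) with h | h
      · have hn : n = m + 1 := hinj h
        rw [show m - n = -1 by omega, abs_neg, abs_one]
      · have hn : n = m - 1 := hinj h
        rw [show m - n = 1 by omega, abs_one]
    · intro habs
      have h2 : n = m + 1 ∨ n = m - 1 := by
        rcases abs_cases (m - n) with ⟨h3, _⟩ | ⟨h3, _⟩ <;> omega
      rcases h2 with rfl | rfl
      · exact C.f_adj m
      · have h3 := (C.f_adj (m - 1)).symm
        rwa [show m - 1 + 1 = m by ring] at h3
  have hadj01 : ∀ m n : ℤ, G.Adj (C.f m) (pend G (C.f n)) ↔ m = n := by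
    intro m n
    constructor
    · intro h
      exact hinj (C.leg_nbr n h.symm)
    · rintro rfl
      exact C.pend_adj m
  have hadj11 : ∀ m n : ℤ, ¬ G.Adj (pend G (C.f m)) (pend G (C.f n)) := by
    intro m n h
    exact hnelp m n (C.leg_nbr m h).symm
  have hrel : ∀ x y : ℤ × Fin 2, G.Adj (C.emap x) (C.emap y) ↔ caterpillar.Adj x y := by
    have hfin : ∀ i : Fin 2, i = 0 ∨ i = 1 := by decide
    rintro ⟨m, i⟩ ⟨n, j⟩
    rcases hfin i with rfl | rfl <;> rcases hfin j with rfl | rfl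
    · rw [C.emap_zero, C.emap_zero, hadj00]
      show _ ↔ ((0 : Fin 2) = 0 ∧ (0 : Fin 2) = 0 ∧ |m - n| = 1) ∨
        (m = n ∧ (((0 : Fin 2) = 0 ∧ (0 : Fin 2) = 1) ∨ ((0 : Fin 2) = 1 ∧ (0 : Fin 2) = 0)))
      simp
    · rw [C.emap_zero, C.emap_one, hadj01]
      show _ ↔ ((0 : Fin 2) = 0 ∧ (1 : Fin 2) = 0 ∧ |m - n| = 1) ∨
        (m = n ∧ (((0 : Fin 2) = 0 ∧ (1 : Fin 2) = 1) ∨ ((0 : Fin 2) = 1 ∧ (1 : Fin 2) = 0)))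
      simp
    · rw [C.emap_one, C.emap_zero]
      have h1 : G.Adj (pend G (C.f m)) (C.f n) ↔ n = m := by
        rw [adj_comm, hadj01]
      rw [h1]
      show _ ↔ ((1 : Fin 2) = 0 ∧ (0 : Fin 2) = 0 ∧ |m - n| = 1) ∨
        (m = n ∧ (((1 : Fin 2) = 0 ∧ (0 : Fin 2) = 1) ∨ ((1 : Fin 2) = 1 ∧ (0 : Fin 2) = 0)))
      simp [eq_comm]
    · rw [C.emap_one, C.emap_one]
      show _ ↔ ((1 : Fin 2) = 0 ∧ (1 : Fin 2) = 0 ∧ |m - n| = 1) ∨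
        (m = n ∧ (((1 : Fin 2) = 0 ∧ (1 : Fin 2) = 1) ∨ ((1 : Fin 2) = 1 ∧ (1 : Fin 2) = 0)))
      constructor
      · intro h
        exact absurd h (hadj11 m n)
      · intro h
        simp at h
  exact ⟨(RelIso.mk (Equiv.ofBijective C.emap hbij) (fun {x y} => hrel x y)).symm⟩
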